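/- Let ε ∈ (0, 1/2]. Let f : ℝ → ℝ and χ : ℝ² → ℝ be continuous nonnegative functions with f(z) = 0 for |z| ≥ ε, χ(y) = 0 for |y| ≥ ε, and f(0)·χ(0) > 0. Then ∫_ℝ f > 0 and ∫_{ℝ²} χ > 0, and for every x₀ ∈ [0,1], every x ∈ ℝ³ with |x| ≤ 1, and every t ≥ 4, the integral u₀(x, t, x₀) = ∫_{η ∈ ℝ³, |x−η| < t} f(η₁ − x₀) χ(η₂, η₃ + 1) / (4π|x − η|) dη satisfies u₀(x, t, x₀) ≥ (1/(16π)) (∫_ℝ f)(∫_{ℝ²} χ) > 0. In particular, on the support of the integrand one has |x − η| < 4 ≤ t, so the ball {η : |x−η| < t} contains the full support of η ↦ f(η₁ − x₀)χ(η₂, η₃ + 1). -/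

import Mathlib

open MeasureTheory Real
open scoped ENNReal

section aux


lemma invdist_int (x : EuclideanSpace ℝ (Fin 3)) :
    IntegrableOn (fun η : EuclideanSpace ℝ (Fin 3) => (dist x η)⁻¹) (Metric.ball x 4) := by
  constructor
  · exact ((continuous_const.dist continuous_id).measurable.inv).aestronglyMeasurable
  · rw [hasFiniteIntegral_iff_norm]
    set C : ℝ≥0∞ := ENNReal.ofReal (Real.sqrt π ^ 3 / Real.Gamma (5 / 2)) with hC
    have hball : ∀ r : ℝ, volume (Metric.ball x r) = ENNReal.ofReal r ^ 3 * C := by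
      intro r
      rw [EuclideanSpace.volume_ball]
      norm_num [hC]
    have key : ∀ η ∈ Metric.ball x 4,
        ENNReal.ofReal ‖(dist x η)⁻¹‖ ≤
        ∑' n : ℕ, (Metric.ball x (4 * 2⁻¹ ^ n)).indicator (fun _ => (2:ℝ≥0∞) ^ n) η := by
      intro η hη
      set d := dist x η with hd
      have hd0 : 0 ≤ d := dist_nonneg
      rcases eq_or_lt_of_le hd0 with h0 | h0
      · simp [← h0]
      have h4 : d < 4 := by rw [hd, dist_comm]; exact hη
      have hex : ∃ n : ℕ, 4 * (2⁻¹:ℝ) ^ n ≤ d := by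
        obtain ⟨n, hn⟩ := exists_pow_lt_of_lt_one (by positivity : (0:ℝ) < d / 4)
          (by norm_num : (2⁻¹:ℝ) < 1)
        exact ⟨n, by nlinarith⟩
      classical
      set k₀ := Nat.find hex with hk₀
      have hk₀spec : 4 * (2⁻¹:ℝ) ^ k₀ ≤ d := Nat.find_spec hex
      have hk₀pos : 0 < k₀ := by
        rcases Nat.eq_zero_or_pos k₀ with h | h
        · exfalso; rw [h] at hk₀spec; norm_num at hk₀spec; linarith
        · exact h
      set k := k₀ - 1 with hk
      have hkk : k + 1 = k₀ := Nat.succ_pred_eq_of_pos hk₀pos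
      have hlt : d < 4 * (2⁻¹:ℝ) ^ k := by
        by_contra h
        push_neg at h
        exact (Nat.find_min hex (by omega : k < k₀)) h
      have hge : 4 * (2⁻¹:ℝ) ^ (k + 1) ≤ d := by rw [hkk]; exact hk₀spec
      have hmem : η ∈ Metric.ball x (4 * 2⁻¹ ^ k) := by
        rw [Metric.mem_ball, dist_comm]; exact hlt
      calc ENNReal.ofReal ‖d⁻¹‖ ≤ (2:ℝ≥0∞) ^ k := by
            rw [Real.norm_eq_abs, abs_of_nonneg (by positivity)]
            rw [show ((2:ℝ≥0∞) ^ k) = ENNReal.ofReal ((2:ℝ) ^ k) by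
              rw [ENNReal.ofReal_pow (by norm_num)]; norm_num]
            apply ENNReal.ofReal_le_ofReal
            rw [inv_le_comm₀ h0 (by positivity)]
            have : (4:ℝ) * 2⁻¹ ^ (k+1) = 2 * 2⁻¹ ^ k * ((2:ℝ) ^ k * 2⁻¹ ^ k) := by
              rw [← mul_pow]; norm_num [pow_succ]; ring
            calc ((2:ℝ)^k)⁻¹ ≤ 2 * 2⁻¹ ^ k := by
                  rw [← inv_pow]; nlinarith [pow_pos (by norm_num : (0:ℝ) < 2⁻¹) k]
              _ ≤ d := by
                  refine le_trans ?_ hge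
                  rw [pow_succ]; nlinarith [pow_pos (by norm_num : (0:ℝ) < 2⁻¹) k]
        _ = (Metric.ball x (4 * 2⁻¹ ^ k)).indicator (fun _ => (2:ℝ≥0∞) ^ k) η := by
            rw [Set.indicator_of_mem hmem]
        _ ≤ _ := ENNReal.le_tsum k
    calc ∫⁻ η in Metric.ball x 4, ENNReal.ofReal ‖(dist x η)⁻¹‖ ∂volume
        ≤ ∫⁻ η in Metric.ball x 4,
            ∑' n : ℕ, (Metric.ball x (4 * 2⁻¹ ^ n)).indicator (fun _ => (2:ℝ≥0∞) ^ n) η ∂volume :=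
          setLIntegral_mono' measurableSet_ball key
      _ ≤ ∫⁻ η, ∑' n : ℕ,
            (Metric.ball x (4 * 2⁻¹ ^ n)).indicator (fun _ => (2:ℝ≥0∞) ^ n) η ∂volume :=
          setLIntegral_le_lintegral _ _
      _ = ∑' n : ℕ, ∫⁻ η,
            (Metric.ball x (4 * 2⁻¹ ^ n)).indicator (fun _ => (2:ℝ≥0∞) ^ n) η ∂volume :=
          lintegral_tsum (fun n => (measurable_const.indicator measurableSet_ball).aemeasurable)
      _ = ∑' n : ℕ, (2:ℝ≥0∞) ^ n * volume (Metric.ball x (4 * 2⁻¹ ^ n)) := by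
          refine tsum_congr (fun n => ?_)
          rw [lintegral_indicator measurableSet_ball, setLIntegral_const]
      _ = ∑' n : ℕ, ENNReal.ofReal (64 * (4⁻¹:ℝ) ^ n) * C := by
          refine tsum_congr (fun n => ?_)
          rw [hball, ← mul_assoc]
          congr 1
          rw [show ((2:ℝ≥0∞) ^ n) = ENNReal.ofReal ((2:ℝ) ^ n) by
                rw [ENNReal.ofReal_pow (by norm_num)]; norm_num,
              ← ENNReal.ofReal_pow (by positivity), ← ENNReal.ofReal_mul (by positivity)]
          congr 1
          have h2 : (2:ℝ) ^ n * 2⁻¹ ^ n = 1 := by rw [← mul_pow]; norm_num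
          have h4' : ((4:ℝ)⁻¹) ^ n = 2⁻¹ ^ n * 2⁻¹ ^ n := by rw [← mul_pow]; norm_num
          rw [h4']
          linear_combination (64 * (2⁻¹:ℝ) ^ n * 2⁻¹ ^ n) * h2
      _ = ENNReal.ofReal (∑' n : ℕ, 64 * (4⁻¹:ℝ) ^ n) * C := by
          rw [ENNReal.tsum_mul_right, ENNReal.ofReal_tsum_of_nonneg (fun n => by positivity)
            ((summable_geometric_of_lt_one (by norm_num) (by norm_num)).mul_left 64)]
      _ < ⊤ := ENNReal.mul_lt_top ENNReal.ofReal_lt_top ENNReal.ofReal_lt_top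



lemma fubini_lemma (f : ℝ → ℝ) (χ : EuclideanSpace ℝ (Fin 2) → ℝ) (x₀ : ℝ) :
    ∫ η : EuclideanSpace ℝ (Fin 3),
        f (η 0 - x₀) * χ ((WithLp.equiv 2 (Fin 2 → ℝ)).symm ![η 1, η 2 + 1])
      = (∫ z : ℝ, f z) * (∫ y : EuclideanSpace ℝ (Fin 2), χ y) := by
  set c : EuclideanSpace ℝ (Fin 2) := (WithLp.equiv 2 (Fin 2 → ℝ)).symm ![0, 1] with hc
  have step1 : ∫ η : EuclideanSpace ℝ (Fin 3),
        f (η 0 - x₀) * χ ((WithLp.equiv 2 (Fin 2 → ℝ)).symm ![η 1, η 2 + 1])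
      = ∫ v : Fin 3 → ℝ, f (v 0 - x₀) * χ ((WithLp.equiv 2 (Fin 2 → ℝ)).symm ![v 1, v 2 + 1]) := by
    rw [← ((EuclideanSpace.volume_preserving_symm_measurableEquiv_toLp (Fin 3)).symm _).integral_comp
      (MeasurableEquiv.measurableEmbedding _)
      (fun η : EuclideanSpace ℝ (Fin 3) =>
        f (η 0 - x₀) * χ ((WithLp.equiv 2 (Fin 2 → ℝ)).symm ![η 1, η 2 + 1]))]
    rfl
  have step2 : ∫ v : Fin 3 → ℝ,
        f (v 0 - x₀) * χ ((WithLp.equiv 2 (Fin 2 → ℝ)).symm ![v 1, v 2 + 1])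
      = ∫ q : ℝ × (Fin 2 → ℝ),
          f (q.1 - x₀) * χ ((WithLp.equiv 2 (Fin 2 → ℝ)).symm ![q.2 0, q.2 1 + 1]) := by
    rw [← ((MeasureTheory.volume_preserving_piFinSuccAbove (fun _ : Fin 3 => ℝ) 0).symm _).integral_comp
      (MeasurableEquiv.measurableEmbedding _)
      (fun v : Fin 3 → ℝ =>
        f (v 0 - x₀) * χ ((WithLp.equiv 2 (Fin 2 → ℝ)).symm ![v 1, v 2 + 1]))]
    congr 1
  have step3 : ∫ q : ℝ × (Fin 2 → ℝ),
          f (q.1 - x₀) * χ ((WithLp.equiv 2 (Fin 2 → ℝ)).symm ![q.2 0, q.2 1 + 1])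
      = (∫ z : ℝ, f (z - x₀)) *
          (∫ w : Fin 2 → ℝ, χ ((WithLp.equiv 2 (Fin 2 → ℝ)).symm ![w 0, w 1 + 1])) :=
    integral_prod_mul (fun z => f (z - x₀))
      (fun w : Fin 2 → ℝ => χ ((WithLp.equiv 2 (Fin 2 → ℝ)).symm ![w 0, w 1 + 1]))
  have step4 : (∫ z : ℝ, f (z - x₀)) = ∫ z : ℝ, f z := integral_sub_right_eq_self f x₀
  have step5 : (∫ w : Fin 2 → ℝ, χ ((WithLp.equiv 2 (Fin 2 → ℝ)).symm ![w 0, w 1 + 1]))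
      = ∫ y : EuclideanSpace ℝ (Fin 2), χ y := by
    have key : ∀ w : Fin 2 → ℝ,
        (WithLp.equiv 2 (Fin 2 → ℝ)).symm ![w 0, w 1 + 1]
          = (WithLp.equiv 2 (Fin 2 → ℝ)).symm w + c := by
      intro w
      ext i
      fin_cases i <;>
        simp [hc, WithLp.equiv_symm_apply, PiLp.toLp_apply, PiLp.add_apply]
    calc (∫ w : Fin 2 → ℝ, χ ((WithLp.equiv 2 (Fin 2 → ℝ)).symm ![w 0, w 1 + 1]))
        = ∫ w : Fin 2 → ℝ, χ ((WithLp.equiv 2 (Fin 2 → ℝ)).symm w + c) := by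
          simp_rw [key]
      _ = ∫ y : EuclideanSpace ℝ (Fin 2), χ (y + c) :=
          ((EuclideanSpace.volume_preserving_symm_measurableEquiv_toLp (Fin 2)).symm _).integral_comp
            (MeasurableEquiv.measurableEmbedding _) (fun y => χ (y + c))
      _ = ∫ y : EuclideanSpace ℝ (Fin 2), χ y := integral_add_right_eq_self χ c
  rw [step1, step2, step3, step4, step5]



lemma aux_pos_int {α : Type*} [MeasureSpace α] [TopologicalSpace α]
    [OpensMeasurableSpace α] [(volume : Measure α).IsOpenPosMeasure]
    {g : α → ℝ} (hc : Continuous g) (hnn : ∀ z, 0 ≤ g z) (hint : Integrable g)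
    {a : α} (ha : 0 < g a) : 0 < ∫ z, g z := by
  rw [integral_pos_iff_support_of_nonneg hnn hint]
  have hop : IsOpen {z | 0 < g z} := isOpen_lt continuous_const hc
  refine lt_of_lt_of_le (hop.measure_pos volume ⟨a, ha⟩) (measure_mono ?_)
  intro z hz
  exact ne_of_gt hz

end aux

set_option maxHeartbeats 1000000

in
/-- Positivity of the first term of the Neumann series for the hyperbolic Cauchy
problem: for `x₀ ∈ [0,1]`, `|x| ≤ 1` and `t ≥ 4`,
`u₀(x,t,x₀) = ∫_{|x−η|<t} f(η₁−x₀) χ(η₂, η₃+1) / (4π|x−η|) dη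
  ≥ (1/(16π)) (∫f)(∫χ) > 0`,
and on the support of the integrand one has `|x − η| < 4 ≤ t`. -/
theorem stmt13 (ε : ℝ) (hε : ε ∈ Set.Ioc (0:ℝ) (1 / 2))
    (f : ℝ → ℝ) (χ : EuclideanSpace ℝ (Fin 2) → ℝ)
    (hfc : Continuous f) (hχc : Continuous χ)
    (hfnn : ∀ z : ℝ, 0 ≤ f z) (hχnn : ∀ y : EuclideanSpace ℝ (Fin 2), 0 ≤ χ y)
    (hfsupp : ∀ z : ℝ, ε ≤ |z| → f z = 0)
    (hχsupp : ∀ y : EuclideanSpace ℝ (Fin 2), ε ≤ ‖y‖ → χ y = 0)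
    (hpos : 0 < f 0 * χ 0) :
    (0 < ∫ z : ℝ, f z) ∧ (0 < ∫ y : EuclideanSpace ℝ (Fin 2), χ y) ∧
    ∀ x₀ ∈ Set.Icc (0:ℝ) 1, ∀ x : EuclideanSpace ℝ (Fin 3), ‖x‖ ≤ 1 →
      ∀ t : ℝ, 4 ≤ t →
      ((1 / (16 * π)) * (∫ z : ℝ, f z) * (∫ y : EuclideanSpace ℝ (Fin 2), χ y) ≤
        ∫ η in {η : EuclideanSpace ℝ (Fin 3) | dist x η < t},
          f (η 0 - x₀) * χ ((WithLp.equiv 2 (Fin 2 → ℝ)).symm ![η 1, η 2 + 1]) /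
            (4 * π * dist x η)) ∧
      ∀ η : EuclideanSpace ℝ (Fin 3),
        f (η 0 - x₀) * χ ((WithLp.equiv 2 (Fin 2 → ℝ)).symm ![η 1, η 2 + 1]) ≠ 0 →
        dist x η < 4 ∧ 4 ≤ t := by
  obtain ⟨hε0, hε12⟩ := hε
  have hf0 : 0 < f 0 := by nlinarith [hfnn 0, hχnn 0]
  have hχ0 : 0 < χ 0 := by nlinarith [hfnn 0, hχnn 0]
  -- integrability of f and χ
  have hfK : HasCompactSupport f := by
    refine HasCompactSupport.intro (isCompact_closedBall (0:ℝ) ε) (fun z hz => ?_)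
    refine hfsupp z ?_
    simp only [Metric.mem_closedBall, Real.dist_eq, sub_zero, not_le] at hz
    exact hz.le
  have hχK : HasCompactSupport χ := by
    refine HasCompactSupport.intro (isCompact_closedBall (0:EuclideanSpace ℝ (Fin 2)) ε)
      (fun y hy => ?_)
    refine hχsupp y ?_
    simp only [Metric.mem_closedBall, dist_zero_right, not_le] at hy
    exact hy.le
  have hfint : Integrable f := hfc.integrable_of_hasCompactSupport hfK
  have hχint : Integrable χ := hχc.integrable_of_hasCompactSupport hχK
  have hIf : 0 < ∫ z : ℝ, f z := aux_pos_int hfc hfnn hfint hf0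
  have hIχ : 0 < ∫ y : EuclideanSpace ℝ (Fin 2), χ y := aux_pos_int hχc hχnn hχint hχ0
  refine ⟨hIf, hIχ, ?_⟩
  rintro x₀ ⟨hx₀0, hx₀1⟩ x hx t ht
  set g : EuclideanSpace ℝ (Fin 3) → ℝ :=
    fun η => f (η 0 - x₀) * χ ((WithLp.equiv 2 (Fin 2 → ℝ)).symm ![η 1, η 2 + 1]) with hg
  -- coordinate continuity
  have hcoord : ∀ i : Fin 3, Continuous fun η : EuclideanSpace ℝ (Fin 3) => η i :=
    fun i => PiLp.continuous_apply 2 _ i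
  have hgc : Continuous g := by
    apply Continuous.mul
    · exact hfc.comp ((hcoord 0).sub continuous_const)
    · refine hχc.comp ?_
      refine (PiLp.continuous_toLp 2 (fun _ : Fin 2 => ℝ)).comp ?_
      refine continuous_pi (fun i => ?_)
      fin_cases i
      · exact hcoord 1
      · exact (hcoord 2).add continuous_const
  -- support estimate
  have hsupp4 : ∀ η : EuclideanSpace ℝ (Fin 3), g η ≠ 0 → dist x η < 4 := by
    intro η hη
    have hf' : f (η 0 - x₀) ≠ 0 := fun h => hη (by rw [hg]; simp [h])
    have hχ' : χ ((WithLp.equiv 2 (Fin 2 → ℝ)).symm ![η 1, η 2 + 1]) ≠ 0 :=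
      fun h => hη (by rw [hg]; exact mul_eq_zero_of_right _ h)
    have h1 : |η 0 - x₀| < ε := by
      by_contra h
      exact hf' (hfsupp _ (not_lt.mp h))
    have h2 : ‖(WithLp.equiv 2 (Fin 2 → ℝ)).symm ![η 1, η 2 + 1]‖ < ε := by
      by_contra h
      exact hχ' (hχsupp _ (not_lt.mp h))
    have hnorm2 : ‖(WithLp.equiv 2 (Fin 2 → ℝ)).symm ![η 1, η 2 + 1]‖
        = Real.sqrt ((η 1) ^ 2 + (η 2 + 1) ^ 2) := by
      rw [EuclideanSpace.norm_eq]
      congr 1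
      rw [Fin.sum_univ_two]
      simp [WithLp.equiv_symm_apply, PiLp.toLp_apply, Real.norm_eq_abs, sq_abs]
    have hsq : (η 1) ^ 2 + (η 2 + 1) ^ 2 < ε ^ 2 := by
      rw [hnorm2] at h2
      have := (Real.sqrt_lt' hε0).mp h2
      linarith
    have hη0 : |η 0 - x₀| < ε := h1
    have habs := abs_lt.mp hη0
    have hη0sq : (η 0) ^ 2 ≤ 9 / 4 := by nlinarith
    have hη1sq : (η 1) ^ 2 < 1 / 4 := by nlinarith [sq_nonneg (η 2 + 1)]
    have hη2sq : (η 2) ^ 2 < 9 / 4 := by nlinarith [hsq, sq_nonneg (η 1), sq_nonneg (η 2 + 3/2), hε0.le, hε12]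
    have hnormη : ‖η‖ ≤ 5 / 2 := by
      rw [EuclideanSpace.norm_eq, Fin.sum_univ_three]
      simp only [Real.norm_eq_abs, sq_abs]
      rw [show (5/2 : ℝ) = Real.sqrt ((5/2) ^ 2) by rw [Real.sqrt_sq (by norm_num)]]
      exact Real.sqrt_le_sqrt (by nlinarith)
    calc dist x η ≤ ‖x‖ + ‖η‖ := by rw [dist_eq_norm]; exact norm_sub_le x η
      _ ≤ 1 + 5 / 2 := add_le_add hx hnormη
      _ < 4 := by norm_num
  refine ⟨?_, fun η hη => ⟨hsupp4 η hη, ht⟩⟩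
  have hπ : 0 < π := pi_pos
  have hgK : HasCompactSupport g := by
    refine HasCompactSupport.intro (isCompact_closedBall x 4) (fun η hη' => ?_)
    by_contra hne
    have h4 := hsupp4 η hne
    simp only [Metric.mem_closedBall, not_le] at hη'
    rw [dist_comm] at hη'
    linarith
  have hgint : Integrable g := hgc.integrable_of_hasCompactSupport hgK
  obtain ⟨M, hM⟩ := hgK.exists_bound_of_continuous hgc
  have hmeas : AEStronglyMeasurable (fun η => g η / (4 * π * dist x η)) volume := by
    refine Measurable.aestronglyMeasurable (Measurable.div hgc.measurable ?_)
    exact measurable_const.mul (continuous_const.dist continuous_id).measurable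
  have hint_h : Integrable (fun η => g η / (4 * π * dist x η)) := by
    refine Integrable.mono'
      (g := fun η => (|M| / (4 * π)) *
        (Metric.ball x 4).indicator (fun η => (dist x η)⁻¹) η)
      (((integrable_indicator_iff measurableSet_ball).mpr
        ((invdist_int x).mono_set (le_refl _))).const_mul _) hmeas ?_
    filter_upwards with η
    by_cases hmem : η ∈ Metric.ball x 4
    · rw [Set.indicator_of_mem hmem]
      have hd0 : 0 ≤ dist x η := dist_nonneg
      rcases eq_or_lt_of_le hd0 with h0 | h0
      · rw [Real.norm_eq_abs, ← h0]
        simp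
      · have hgM : |g η| ≤ |M| := le_trans (by rw [← Real.norm_eq_abs]; exact hM η)
          (le_abs_self M)
        rw [Real.norm_eq_abs, abs_div, abs_of_pos (by positivity : (0:ℝ) < 4 * π * dist x η)]
        rw [show (|M| / (4 * π)) * (dist x η)⁻¹ = |M| / (4 * π * dist x η) by
          field_simp]
        exact div_le_div_of_nonneg_right hgM (by positivity) |>.trans (le_refl _)
    · rw [Set.indicator_of_notMem hmem]
      have hgz : g η = 0 := by
        by_contra hne
        exact hmem (by rw [Metric.mem_ball, dist_comm]; exact hsupp4 η hne)
      simp [hgz]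
  have hxae : ∀ᵐ η : EuclideanSpace ℝ (Fin 3), η ≠ x := by
    refine ae_iff.mpr ?_
    have : {η : EuclideanSpace ℝ (Fin 3) | ¬ η ≠ x} = {x} := by
      ext η; simp
    rw [this]
    exact measure_singleton x
  have haeineq : (fun η => (1 / (16 * π)) * g η)
      ≤ᵐ[volume] (fun η => g η / (4 * π * dist x η)) := by
    filter_upwards [hxae] with η hne
    by_cases hgz : g η = 0
    · simp [hgz]
    · have hd : 0 < dist x η := dist_pos.mpr (Ne.symm hne)
      have h4 : dist x η < 4 := hsupp4 η hgz
      have hgnn : 0 ≤ g η := mul_nonneg (hfnn _) (hχnn _)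
      rw [show (1 / (16 * π)) * g η = g η / (16 * π) by ring]
      exact div_le_div_of_nonneg_left hgnn (by positivity) (by nlinarith)
  have hmono := setIntegral_mono_ae (s := {η : EuclideanSpace ℝ (Fin 3) | dist x η < t})
    ((hgint.const_mul (1 / (16 * π))).integrableOn) hint_h.integrableOn haeineq
  have hSzero : ∀ η : EuclideanSpace ℝ (Fin 3),
      η ∉ {η : EuclideanSpace ℝ (Fin 3) | dist x η < t} → (1 / (16 * π)) * g η = 0 := by
    intro η hη
    by_cases hgz : g η = 0
    · rw [hgz, mul_zero]
    · exact absurd (lt_of_lt_of_le (hsupp4 η hgz) ht) hη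
  have heq : ∫ η in {η : EuclideanSpace ℝ (Fin 3) | dist x η < t}, (1 / (16 * π)) * g η
      = (1 / (16 * π)) * ((∫ z : ℝ, f z) * (∫ y : EuclideanSpace ℝ (Fin 2), χ y)) := by
    rw [setIntegral_eq_integral_of_forall_compl_eq_zero hSzero, integral_const_mul, hg,
      fubini_lemma]
  rw [heq] at hmono
  calc (1 / (16 * π)) * (∫ z : ℝ, f z) * (∫ y : EuclideanSpace ℝ (Fin 2), χ y)
      = (1 / (16 * π)) * ((∫ z : ℝ, f z) * (∫ y : EuclideanSpace ℝ (Fin 2), χ y)) := by ring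
    _ ≤ _ := hmono
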